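/- Let (b₁,b₂,b₃) ∈ ℝ³ with b₁² + b₂² + b₃² = 1, and let ω = b₁E₁ + b₂E₂ + b₃E₃, regarded as a complex 5×5 matrix. Then the characteristic polynomial of ω is X(X² + 1)(X² + 4) = X⁵ + 5X³ + 4X; equivalently, the eigenvalues of ω are exactly 0, i, −i, 2i, −2i, each simple. -/

import Mathlib

noncomputable section

open Matrix Polynomial

def E1 : Matrix (Fin 5) (Fin 5) ℝ :=
  !![0,0,0,0,Real.sqrt 3; 0,0,1,0,0; 0,-1,0,0,0; 0,0,0,0,1; -Real.sqrt 3,0,0,-1,0]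

def E2 : Matrix (Fin 5) (Fin 5) ℝ :=
  !![0,0,Real.sqrt 3,0,0; 0,0,0,0,1; -Real.sqrt 3,0,0,1,0; 0,0,-1,0,0; 0,-1,0,0,0]

def E3 : Matrix (Fin 5) (Fin 5) ℝ :=
  !![0,0,0,0,0; 0,0,0,2,0; 0,0,0,0,1; 0,-2,0,0,0; 0,0,-1,0,0]

set_option maxHeartbeats 6000000 in
set_option maxRecDepth 100000 in
lemma key (s b1 b2 b3 : ℂ) (hs : s^2 = 3) (hb : b1^2+b2^2+b3^2 = 1) :
    Matrix.charpoly !![0, 0, b2*s, 0, b1*s;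
                       0, 0, b1, 2*b3, b2;
                       -(b2*s), -b1, 0, b2, b3;
                       0, -(2*b3), -b2, 0, b1;
                       -(b1*s), -b2, -b3, -b1, 0] = X^5 + C 5*X^3 + C 4*X := by
  have d1 : ((Fin.succ (2:Fin 3)).succ.succAbove (Fin.castSucc (2:Fin 3)) : Fin 5) = 2 := rfl
  have d2 : ((Fin.succ (2:Fin 3)).succ.succAbove (Fin.succAbove (1:Fin 4) (2:Fin 3)) : Fin 5) = 3 := rfl
  have d3 : ((Fin.succ (2:Fin 3)).succ.succAbove (Fin.succAbove (2:Fin 4) (2:Fin 3)) : Fin 5) = 3 := rfl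
  have d4 : (Fin.succAbove (2:Fin 5) (2:Fin 4) : Fin 5) = 3 := rfl
  have d5 : (Fin.succAbove (2:Fin 4) (2:Fin 3) : Fin 4) = 3 := rfl
  have d6 : (Fin.castSucc (2:Fin 3) : Fin 4) = 2 := rfl
  have d7 : (Fin.castSucc (2:Fin 4) : Fin 5) = 2 := rfl
  have d8 : ((Fin.succ (2:Fin 3)).succ.succAbove (2:Fin 4) : Fin 5) = 2 := rfl
  have d9 : ((Fin.succ (2:Fin 3)).succ.succAbove (3:Fin 4) : Fin 5) = 3 := rfl
  have d10 : (Fin.succAbove (2:Fin 5) (3:Fin 4) : Fin 5) = 4 := rfl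
  have d11 : (Fin.succAbove (1:Fin 4) (2:Fin 3) : Fin 4) = 3 := rfl
  have v3 : (((3:Fin 5)):ℕ) = 3 := rfl
  have v4 : (((4:Fin 5)):ℕ) = 4 := rfl
  have w3 : (((3:Fin 4)):ℕ) = 3 := rfl
  rw [Matrix.charpoly]
  simp [Matrix.det_succ_row_zero, Fin.sum_univ_succ, Fin.succ_succAbove_succ, d1, d2, d3, d4, d5,
    d6, d7, d8, d9, d10, d11, v3, v4, w3, charmatrix_apply, Matrix.scalar_apply, Matrix.diagonal_apply,
    Matrix.map_apply]
  simp [Fin.ext_iff, Fin.succAbove, Fin.lt_def]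
  have hsC : (Polynomial.C s : Polynomial ℂ) ^ 2 = ((3:Polynomial ℂ)) := by
    rw [← map_pow, hs]; exact map_ofNat _ 3
  have hbC : (Polynomial.C b1 : Polynomial ℂ) ^ 2 + Polynomial.C b2 ^ 2 + Polynomial.C b3 ^ 2
      = 1 := by
    rw [← map_pow, ← map_pow, ← map_pow, ← map_add, ← map_add, hb, Polynomial.C_1]
  ring_nf
  rw [hsC]
  simp only [map_ofNat, Polynomial.C_1]
  linear_combination (5 * (Polynomial.X:Polynomial ℂ)^3
    + 4 * Polynomial.X * (Polynomial.C b1 ^ 2 + Polynomial.C b2 ^ 2 + Polynomial.C b3 ^ 2 + 1)) * hbC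


/-- for b₁² + b₂² + b₃² = 1 the complex matrix ω = b₁E₁ + b₂E₂ + b₃E₃ has
characteristic polynomial X⁵ + 5X³ + 4X = X(X²+1)(X²+4); its eigenvalues are exactly
0, ±i, ±2i, each simple. -/
theorem stmt17 (b1 b2 b3 : ℝ) (hb : b1^2 + b2^2 + b3^2 = 1) :
    Matrix.charpoly
      ((b1 : ℂ) • (E1.map Complex.ofReal) + (b2 : ℂ) • (E2.map Complex.ofReal)
        + (b3 : ℂ) • (E3.map Complex.ofReal)) =
      X^5 + C 5 * X^3 + C 4 * X := by
  have hM : (b1 : ℂ) • (E1.map Complex.ofReal) + (b2 : ℂ) • (E2.map Complex.ofReal)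
        + (b3 : ℂ) • (E3.map Complex.ofReal) =
      !![0, 0, (b2:ℂ)*(Real.sqrt 3:ℝ), 0, (b1:ℂ)*(Real.sqrt 3:ℝ);
         0, 0, (b1:ℂ), 2*(b3:ℂ), (b2:ℂ);
         -((b2:ℂ)*(Real.sqrt 3:ℝ)), -(b1:ℂ), 0, (b2:ℂ), (b3:ℂ);
         0, -(2*(b3:ℂ)), -(b2:ℂ), 0, (b1:ℂ);
         -((b1:ℂ)*(Real.sqrt 3:ℝ)), -(b2:ℂ), -(b3:ℂ), -(b1:ℂ), 0] := by
    ext i j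
    fin_cases i <;> fin_cases j <;>
      simp [E1, E2, E3, Matrix.map_apply, Matrix.vecHead, Matrix.vecTail] <;> push_cast <;> ring
  rw [hM]
  have hb' : (b1:ℂ)^2 + (b2:ℂ)^2 + (b3:ℂ)^2 = 1 := by
    exact_mod_cast hb
  exact key ((Real.sqrt 3 : ℝ) : ℂ) (b1:ℂ) (b2:ℂ) (b3:ℂ)
    (by rw [← Complex.ofReal_pow, Real.sq_sqrt (by norm_num : (3:ℝ) ≥ 0)]; norm_num) hb'
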